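/- For all real x > 0 with x ≠ 1, ln(x) + 1 - x = (1-x)·ln(x)·∑_{k=1}^∞ 1/(2^k·(1 + x^(2^(-k)))). -/

import Mathlib

open Real Filter Finset

theorem ramanujan_log_consequence (x : ℝ) (hx : 0 < x) (hx1 : x ≠ 1) :
    Real.log x + 1 - x =
      (1 - x) * Real.log x *
        ∑' k : ℕ, 1 / ((2 : ℝ) ^ (k + 1) * (1 + x ^ ((2 : ℝ) ^ (-((k : ℝ) + 1))))) := by
  set c := Real.log x with hc
  have hc0 : c ≠ 0 := by
    simp only [hc, ne_eq, Real.log_eq_zero]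
    push_neg
    exact ⟨hx.ne', hx1, by linarith⟩
  set f : ℕ → ℝ := fun k => 1 / ((2 : ℝ) ^ (k + 1) * (1 + x ^ ((2 : ℝ) ^ (-((k : ℝ) + 1))))) with hf
  set g : ℕ → ℝ := fun n => 1 / ((2 : ℝ) ^ n * (x ^ ((2 : ℝ) ^ (-(n : ℝ))) - 1)) with hg
  -- basic facts about the rpow terms
  have hne1 : ∀ p : ℝ, p ≠ 0 → x ^ p ≠ 1 := by
    intro p hp h1
    have := Real.log_rpow hx p
    rw [h1, Real.log_one] at this
    rcases mul_eq_zero.1 this.symm with h | h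
    · exact hp h
    · exact hc0 h
  have hpos : ∀ p : ℝ, 0 < x ^ p := fun p => Real.rpow_pos_of_pos hx p
  -- telescoping identity
  have hstep : ∀ k : ℕ, f k = g (k + 1) - g k := by
    intro k
    have hexp : (2 : ℝ) ^ (-(((k : ℕ) + 1 : ℕ) : ℝ)) = (2 : ℝ) ^ (-((k : ℝ) + 1)) := by
      push_cast; ring_nf
    have hsq : x ^ ((2 : ℝ) ^ (-((k : ℝ) + 1))) * x ^ ((2 : ℝ) ^ (-((k : ℝ) + 1)))
        = x ^ ((2 : ℝ) ^ (-(k : ℝ))) := by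
      rw [← Real.rpow_add hx]
      congr 1
      rw [← two_mul, show (2 : ℝ) * 2 ^ (-((k : ℝ) + 1)) = 2 ^ (1 + (-((k : ℝ) + 1))) by
        rw [Real.rpow_add (by norm_num : (0:ℝ) < 2), Real.rpow_one]]
      ring_nf
    set y := x ^ ((2 : ℝ) ^ (-((k : ℝ) + 1))) with hy
    have hy0 : 0 < y := hpos _
    have hy1 : y ≠ 1 := hne1 _ (by positivity)
    have hyk : x ^ ((2 : ℝ) ^ (-(k : ℝ))) ≠ 1 := hne1 _ (by positivity)
    simp only [hf, hg, hexp, ← hsq, ← hy]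
    have h2k : (2 : ℝ) ^ k ≠ 0 := by positivity
    have hy1' : y - 1 ≠ 0 := sub_ne_zero.2 hy1
    have hyy : y * y - 1 ≠ 0 := by rw [hsq]; exact sub_ne_zero.2 hyk
    have hy2 : 1 + y ≠ 0 := by positivity
    have hyy2 : y ^ 2 - 1 ≠ 0 := by rw [sq]; exact hyy
    field_simp
    ring
  -- partial sums
  have hpartial : ∀ n : ℕ, ∑ k ∈ Finset.range n, f k = g n - g 0 := by
    intro n
    induction n with
    | zero => simp
    | succ n ih => rw [Finset.sum_range_succ, ih, hstep n]; ring
  -- limit of g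
  have hslope : Tendsto (fun h : ℝ => (Real.exp h - 1) / h) (nhdsWithin 0 {0}ᶜ) (nhds 1) := by
    have := (Real.hasDerivAt_exp 0)
    rw [hasDerivAt_iff_tendsto_slope] at this
    simpa [slope_fun_def_field, Real.exp_zero] using this
  set h : ℕ → ℝ := fun n => c * (2 : ℝ) ^ (-(n : ℝ)) with hh
  have hrp : ∀ n : ℕ, ((2 : ℝ) ^ (-(n : ℝ))) = ((2 : ℝ)⁻¹) ^ n := by
    intro n
    rw [Real.rpow_neg (by norm_num), Real.rpow_natCast, inv_pow]
  have hh0 : Tendsto h atTop (nhdsWithin 0 {0}ᶜ) := by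
    rw [tendsto_nhdsWithin_iff]
    constructor
    · have : Tendsto (fun n : ℕ => ((2 : ℝ)⁻¹) ^ n) atTop (nhds 0) :=
        tendsto_pow_atTop_nhds_zero_of_lt_one (by norm_num) (by norm_num)
      have := this.const_mul c
      rw [mul_zero] at this
      refine this.congr fun n => ?_
      simp [hh, hrp n]
    · filter_upwards with n
      simp only [Set.mem_compl_iff, Set.mem_singleton_iff, hh]
      positivity
  have hgt : Tendsto g atTop (nhds c⁻¹) := by
    have key : ∀ n : ℕ, (2 : ℝ) ^ n * (x ^ ((2 : ℝ) ^ (-(n : ℝ))) - 1)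
        = c * ((Real.exp (h n) - 1) / h n) := by
      intro n
      have h2 : ((2 : ℝ) ^ (-(n : ℝ))) ≠ 0 := by positivity
      have hx' : x ^ ((2 : ℝ) ^ (-(n : ℝ))) = Real.exp (h n) := by
        rw [Real.rpow_def_of_pos hx]
      rw [hx', hh]
      have h2n : (2 : ℝ) ^ (n : ℕ) = ((2 : ℝ) ^ (-(n : ℝ)))⁻¹ := by
        rw [Real.rpow_neg (by norm_num), Real.rpow_natCast, inv_inv]
      rw [h2n]
      field_simp
    have : Tendsto (fun n : ℕ => (2 : ℝ) ^ n * (x ^ ((2 : ℝ) ^ (-(n : ℝ))) - 1)) atTop (nhds c) := by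
      have := (hslope.comp hh0).const_mul c
      rw [mul_one] at this
      exact this.congr fun n => (key n).symm
    have := this.inv₀ hc0
    refine this.congr fun n => ?_
    simp [hg, one_div]
  -- summability
  have hfpos : ∀ k, 0 ≤ f k := by
    intro k
    have := hpos ((2 : ℝ) ^ (-((k : ℝ) + 1)))
    simp only [hf]
    positivity
  have hsummable : Summable f := by
    refine Summable.of_nonneg_of_le hfpos (fun k => ?_)
      ((summable_geometric_of_lt_one (by norm_num) (by norm_num : (1:ℝ)/2 < 1)).mul_left (1/2))
    have hy0 := hpos ((2 : ℝ) ^ (-((k : ℝ) + 1)))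
    simp only [hf]
    rw [div_le_iff₀ (by positivity)]
    have : (1:ℝ)/2 * (1/2)^k = 1 / 2^(k+1) := by
      rw [div_pow, one_pow, pow_succ]; ring
    rw [this]
    rw [div_mul_eq_mul_div, le_div_iff₀ (by positivity)]
    nlinarith [pow_pos (by norm_num : (0:ℝ) < 2) (k+1)]
  -- identify the sum
  have hsum : ∑' k, f k = c⁻¹ - g 0 := by
    have h1 : Tendsto (fun n => ∑ k ∈ Finset.range n, f k) atTop (nhds (∑' k, f k)) :=
      hsummable.hasSum.tendsto_sum_nat
    have h2 : Tendsto (fun n => ∑ k ∈ Finset.range n, f k) atTop (nhds (c⁻¹ - g 0)) := by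
      have := hgt.sub_const (g 0)
      exact this.congr fun n => (hpartial n).symm
    exact tendsto_nhds_unique h1 h2
  have hg0 : g 0 = 1 / (x - 1) := by
    simp [hg, Real.rpow_zero, Real.rpow_one]
  rw [hsum, hg0]
  have hx1' : x - 1 ≠ 0 := sub_ne_zero.2 hx1
  field_simp
  ring
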